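/- Let $p$ be a $C^2$ density on $[0,1]$ with $p\ge l_p>0$ and unique $q$-quantile $y_q$. Fix $0<r_\ell<y_q<r_u<1$, define $\lambda(y)=\frac{p(y)-p(y_q)}{\int_{y_q}^y p(z)\,dz}$ for $y\ne y_q$ (with $\lambda(y_q)=p'(y_q)/p(y_q)$), $D(y)=\exp(\int_{y_q}^y\lambda(s)\,ds)$, and $\delta(y)=D'(y)=\lambda(y)D(y)$ on $[r_\ell,r_u]$. Let $\bar\delta$ be any $C^2$ extension of $\delta$ to $[0,1]$ with $\int_0^{r_\ell}\bar\delta(u)\,du=D(r_\ell)$ and $\int_0^1\bar\delta(u)\,du=0$, and let $y_{\eta,q}$ denote the $q$-quantile of $p+\eta\bar\delta$. If $y_{\eta,q}\in[r_\ell,r_u]$, then $p(y_{\eta,q})+\eta\bar\delta(y_{\eta,q})=p(y_q)$. -/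

import Mathlib

open MeasureTheory intervalIntegral

/-- Perturbing a density while preserving the density at the moving quantile:
if the perturbed `q`-quantile stays in `[r_ℓ, r_u]`, then the perturbed density
evaluated at it equals the original density at the original quantile. -/
theorem stmt_15 (p : ℝ → ℝ) (lp q yq rl ru : ℝ)
    (hpC2 : ContDiffOn ℝ 2 p (Set.Icc 0 1))
    (hlp : 0 < lp) (hpl : ∀ y ∈ Set.Icc (0 : ℝ) 1, lp ≤ p y)
    (hq0 : 0 < q) (hq1 : q < 1)
    (hrl : 0 < rl) (hrlyq : rl < yq) (hyqru : yq < ru) (hru : ru < 1)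
    (hyq : ∫ u in (0 : ℝ)..yq, p u = q * ∫ u in (0 : ℝ)..1, p u)
    (huniq : ∀ y ∈ Set.Icc (0 : ℝ) 1,
      (∫ u in (0 : ℝ)..y, p u = q * ∫ u in (0 : ℝ)..1, p u) → y = yq)
    (lam D δbar : ℝ → ℝ)
    (hlam : ∀ y ∈ Set.Icc (0 : ℝ) 1, y ≠ yq →
      lam y = (p y - p yq) / ∫ z in yq..y, p z)
    (hlamyq : lam yq = deriv p yq / p yq)
    (hD : ∀ y ∈ Set.Icc (0 : ℝ) 1, D y = Real.exp (∫ s in yq..y, lam s))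
    (hδ : ∀ y ∈ Set.Icc rl ru, δbar y = lam y * D y)
    (hδC2 : ContDiffOn ℝ 2 δbar (Set.Icc 0 1))
    (hδint1 : ∫ u in (0 : ℝ)..rl, δbar u = D rl)
    (hδint0 : ∫ u in (0 : ℝ)..1, δbar u = 0)
    (η yηq : ℝ)
    (hyηq : ∫ u in (0 : ℝ)..yηq, (p u + η * δbar u)
      = q * ∫ u in (0 : ℝ)..1, (p u + η * δbar u))
    (hmem : yηq ∈ Set.Icc rl ru) :
    p yηq + η * δbar yηq = p yq := by
  have hyqI : yq ∈ Set.Icc (0:ℝ) 1 := ⟨le_of_lt (hrl.trans hrlyq), le_of_lt (hyqru.trans hru)⟩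
  have hsubU : Set.Icc rl ru ⊆ Set.Ioo (0:ℝ) 1 := fun x hx =>
    ⟨lt_of_lt_of_le hrl hx.1, lt_of_le_of_lt hx.2 hru⟩
  have hsubI : Set.Icc rl ru ⊆ Set.Icc (0:ℝ) 1 :=
    hsubU.trans Set.Ioo_subset_Icc_self
  have hyqU : yq ∈ Set.Ioo (0:ℝ) 1 := ⟨hrl.trans hrlyq, hyqru.trans hru⟩
  have hnhds : ∀ s ∈ Set.Ioo (0:ℝ) 1, Set.Icc (0:ℝ) 1 ∈ nhds s := fun s hs =>
    Icc_mem_nhds hs.1 hs.2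
  have hpcont : ContinuousOn p (Set.Icc 0 1) := hpC2.continuousOn
  have hpca : ∀ s ∈ Set.Ioo (0:ℝ) 1, ContinuousAt p s := fun s hs =>
    hpcont.continuousAt (hnhds s hs)
  -- interval integrability of p between points of [0,1]
  have hpint : ∀ a ∈ Set.Icc (0:ℝ) 1, ∀ b ∈ Set.Icc (0:ℝ) 1,
      IntervalIntegrable p volume a b := by
    intro a ha b hb
    exact (hpcont.mono (Set.uIcc_subset_Icc ha hb)).intervalIntegrable
  -- g y = ∫ yq..y p, positive/negative away from yq
  set g : ℝ → ℝ := fun y => ∫ z in yq..y, p z with hg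
  have hgne : ∀ y ∈ Set.Icc (0:ℝ) 1, y ≠ yq → g y ≠ 0 := by
    intro y hy hne
    rcases lt_or_gt_of_ne hne with h | h
    · have hpos : 0 < ∫ z in y..yq, p z := by
        apply intervalIntegral.intervalIntegral_pos_of_pos_on
          (hpint y hy yq hyqI)
        · intro x hx
          exact lt_of_lt_of_le hlp (hpl x ⟨le_of_lt (lt_of_le_of_lt hy.1 hx.1),
            le_of_lt (lt_of_lt_of_le hx.2 hyqI.2)⟩)
        · exact h
      have : g y = -∫ z in y..yq, p z := intervalIntegral.integral_symm y yq
      rw [this]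
      exact neg_ne_zero.mpr (ne_of_gt hpos)
    · have hpos : 0 < g y := by
        apply intervalIntegral.intervalIntegral_pos_of_pos_on
          (hpint yq hyqI y hy)
        · intro x hx
          exact lt_of_lt_of_le hlp (hpl x ⟨le_of_lt (lt_of_le_of_lt hyqI.1 hx.1),
            le_of_lt (lt_of_lt_of_le hx.2 hy.2)⟩)
        · exact h
      exact ne_of_gt hpos
  have hgderiv : ∀ s ∈ Set.Ioo (0:ℝ) 1, HasDerivAt g (p s) s := by
    intro s hs
    exact intervalIntegral.integral_hasDerivAt_right
      (hpint yq hyqI s (Set.Ioo_subset_Icc_self hs))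
      (ContinuousAt.stronglyMeasurableAtFilter isOpen_Ioo hpca s hs)
      (hpca s hs)
  -- continuity of lam on (0,1)
  have hlamcayq : ContinuousAt lam yq := by
      have hpd : HasDerivAt p (deriv p yq) yq :=
        ((hpC2.contDiffAt (hnhds yq hyqU)).differentiableAt
          (by norm_num)).hasDerivAt
      have hslp : Filter.Tendsto (slope p yq) (nhdsWithin yq {yq}ᶜ)
          (nhds (deriv p yq)) := hasDerivAt_iff_tendsto_slope.mp hpd
      have hslg : Filter.Tendsto (slope g yq) (nhdsWithin yq {yq}ᶜ)
          (nhds (p yq)) := hasDerivAt_iff_tendsto_slope.mp (hgderiv yq hyqU)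
      have hpne : p yq ≠ 0 := ne_of_gt (lt_of_lt_of_le hlp (hpl yq hyqI))
      have hquot : Filter.Tendsto (fun y => slope p yq y / slope g yq y)
          (nhdsWithin yq {yq}ᶜ) (nhds (deriv p yq / p yq)) :=
        hslp.div hslg hpne
      have heq : ∀ᶠ y in nhdsWithin yq {yq}ᶜ,
          slope p yq y / slope g yq y = lam y := by
        filter_upwards [nhdsWithin_le_nhds (hnhds yq hyqU),
          self_mem_nhdsWithin] with y hyI (hyne : y ∈ ({yq}ᶜ : Set ℝ))
        have hyne' : y ≠ yq := hyne
        have hsub : y - yq ≠ 0 := sub_ne_zero.mpr hyne'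
        rw [hlam y hyI hyne']
        have hgyq : g yq = 0 := intervalIntegral.integral_same
        rw [slope_def_field, slope_def_field, hgyq, sub_zero]
        show (p y - p yq) / (y - yq) / (g y / (y - yq)) = (p y - p yq) / g y
        rw [div_div_div_cancel_right₀ hsub]
      have htend : Filter.Tendsto lam (nhdsWithin yq {yq}ᶜ) (nhds (lam yq)) := by
        rw [hlamyq]
        exact hquot.congr' heq
      have : Filter.Tendsto lam (nhds yq) (nhds (lam yq)) := by
        rw [← nhdsNE_sup_pure]
        exact htend.sup (tendsto_pure_nhds lam yq)
      exact this
  have hlamca : ∀ s ∈ Set.Ioo (0:ℝ) 1, ContinuousAt lam s := by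
    intro s hs
    by_cases hsyq : s = yq
    · exact hsyq ▸ hlamcayq
    · -- continuity away from yq
      have hgca : ContinuousAt g s := (hgderiv s hs).continuousAt
      have hquot : ContinuousAt (fun y => (p y - p yq) / g y) s :=
        ((hpca s hs).sub continuousAt_const).div hgca
          (hgne s (Set.Ioo_subset_Icc_self hs) hsyq)
      apply hquot.congr
      have hmem' : Set.Icc (0:ℝ) 1 ∩ {yq}ᶜ ∈ nhds s := by
        apply Filter.inter_mem (hnhds s hs)
        exact compl_singleton_mem_nhds hsyq
      filter_upwards [hmem'] with y hy
      exact (hlam y hy.1 hy.2).symm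
  -- F and D
  set F : ℝ → ℝ := fun y => ∫ s in yq..y, lam s with hF
  have hlamint : ∀ a ∈ Set.Ioo (0:ℝ) 1, ∀ b ∈ Set.Ioo (0:ℝ) 1,
      IntervalIntegrable lam volume a b := by
    intro a ha b hb
    apply ContinuousOn.intervalIntegrable
    intro x hx
    exact (hlamca x (Set.ordConnected_Ioo.uIcc_subset ha hb hx)).continuousWithinAt
  have hFderiv : ∀ s ∈ Set.Ioo (0:ℝ) 1, HasDerivAt F (lam s) s := by
    intro s hs
    exact intervalIntegral.integral_hasDerivAt_right
      (hlamint yq hyqU s hs)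
      (ContinuousAt.stronglyMeasurableAtFilter isOpen_Ioo hlamca s hs)
      (hlamca s hs)
  have hDderiv : ∀ s ∈ Set.Ioo (0:ℝ) 1, HasDerivAt D (lam s * D s) s := by
    intro s hs
    have h1 : HasDerivAt (fun y => Real.exp (F y)) (Real.exp (F s) * lam s) s :=
      (hFderiv s hs).exp
    have h2 : D =ᶠ[nhds s] fun y => Real.exp (F y) := by
      filter_upwards [hnhds s hs] with y hy
      exact hD y hy
    have h3 : HasDerivAt D (Real.exp (F s) * lam s) s :=
      h1.congr_of_eventuallyEq h2
    have h4 : Real.exp (F s) = D s := (hD s (Set.Ioo_subset_Icc_self hs)).symm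
    rw [h4] at h3
    rwa [mul_comm] at h3
  -- key : ∫ 0..y δbar = D y for y ∈ [rl, ru]
  have hkey : ∀ y ∈ Set.Icc rl ru, ∫ u in (0:ℝ)..y, δbar u = D y := by
    intro y hy
    have hyU : y ∈ Set.Ioo (0:ℝ) 1 := hsubU hy
    have hrlU : rl ∈ Set.Ioo (0:ℝ) 1 := hsubU ⟨le_refl rl, le_of_lt (hrlyq.trans hyqru)⟩
    have hδcont : ContinuousOn δbar (Set.Icc 0 1) := hδC2.continuousOn
    have hδint : ∀ a ∈ Set.Icc (0:ℝ) 1, ∀ b ∈ Set.Icc (0:ℝ) 1,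
        IntervalIntegrable δbar volume a b := fun a ha b hb =>
      (hδcont.mono (Set.uIcc_subset_Icc ha hb)).intervalIntegrable
    have hsplit : (∫ u in (0:ℝ)..rl, δbar u) + ∫ u in rl..y, δbar u
        = ∫ u in (0:ℝ)..y, δbar u :=
      intervalIntegral.integral_add_adjacent_intervals
        (hδint 0 (Set.left_mem_Icc.mpr zero_le_one) rl (hsubI ⟨le_refl rl, le_of_lt (hrlyq.trans hyqru)⟩))
        (hδint rl (hsubI ⟨le_refl rl, le_of_lt (hrlyq.trans hyqru)⟩) y (hsubI hy))
    have huIcc : Set.uIcc rl y ⊆ Set.Icc rl ru := by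
      rw [Set.uIcc_of_le hy.1]
      exact Set.Icc_subset_Icc (le_refl rl) hy.2
    have hcongr : ∫ u in rl..y, δbar u = ∫ u in rl..y, lam u * D u := by
      apply intervalIntegral.integral_congr
      intro x hx
      exact hδ x (huIcc hx)
    have hftc : ∫ u in rl..y, lam u * D u = D y - D rl := by
      apply intervalIntegral.integral_eq_sub_of_hasDerivAt
      · intro x hx
        exact hDderiv x (hsubU (huIcc hx))
      · apply ContinuousOn.intervalIntegrable
        intro x hx
        have hxU := hsubU (huIcc hx)
        exact ((hlamca x hxU).mul (hDderiv x hxU).continuousAt).continuousWithinAt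
    rw [← hsplit, hδint1, hcongr, hftc]
    ring
  -- quantile computation
  have hyηqI : yηq ∈ Set.Icc (0:ℝ) 1 := hsubI hmem
  have hδcont : ContinuousOn δbar (Set.Icc 0 1) := hδC2.continuousOn
  have hδint : ∀ a ∈ Set.Icc (0:ℝ) 1, ∀ b ∈ Set.Icc (0:ℝ) 1,
      IntervalIntegrable δbar volume a b := fun a ha b hb =>
    (hδcont.mono (Set.uIcc_subset_Icc ha hb)).intervalIntegrable
  have h0I : (0:ℝ) ∈ Set.Icc (0:ℝ) 1 := Set.left_mem_Icc.mpr zero_le_one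
  have h1I : (1:ℝ) ∈ Set.Icc (0:ℝ) 1 := Set.right_mem_Icc.mpr zero_le_one
  have hsplit1 : ∫ u in (0:ℝ)..yηq, (p u + η * δbar u)
      = (∫ u in (0:ℝ)..yηq, p u) + η * ∫ u in (0:ℝ)..yηq, δbar u := by
    rw [intervalIntegral.integral_add (hpint 0 h0I yηq hyηqI)
      ((hδint 0 h0I yηq hyηqI).const_mul η), intervalIntegral.integral_const_mul]
  have hsplit2 : ∫ u in (0:ℝ)..1, (p u + η * δbar u)
      = ∫ u in (0:ℝ)..1, p u := by
    rw [intervalIntegral.integral_add (hpint 0 h0I 1 h1I)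
      ((hδint 0 h0I 1 h1I).const_mul η), intervalIntegral.integral_const_mul,
      hδint0, mul_zero, add_zero]
  -- ∫ yq..yηq p = -η * D yηq
  have hmain : ∫ z in yq..yηq, p z = -(η * D yηq) := by
    have h1 : (∫ u in (0:ℝ)..yηq, p u) + η * D yηq = ∫ u in (0:ℝ)..yq, p u := by
      rw [← hkey yηq hmem, ← hsplit1, hyηq, hsplit2, hyq]
    have h2 : (∫ u in (0:ℝ)..yq, p u) + ∫ z in yq..yηq, p z
        = ∫ u in (0:ℝ)..yηq, p u :=
      intervalIntegral.integral_add_adjacent_intervals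
        (hpint 0 h0I yq hyqI) (hpint yq hyqI yηq hyηqI)
    linarith
  by_cases hcase : yηq = yq
  · subst hcase
    have : η * D yηq = 0 := by
      have := hmain
      rw [intervalIntegral.integral_same] at this
      linarith
    have hDpos : 0 < D yηq := by
      rw [hD yηq hyηqI]; exact Real.exp_pos _
    have hη : η = 0 := by
      rcases mul_eq_zero.mp this with h | h
      · exact h
      · exact absurd h (ne_of_gt hDpos)
    rw [hδ yηq hmem, hη]
    ring
  · have hlameq := hlam yηq hyηqI hcase
    have hgne' := hgne yηq hyηqI hcase
    rw [hδ yηq hmem, hlameq]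
    have hDpos : 0 < D yηq := by
      rw [hD yηq hyηqI]; exact Real.exp_pos _
    -- η * ((p yηq - p yq) / g yηq * D yηq) = p yq - p yηq
    have hηne : η ≠ 0 := by
      intro h0
      apply hgne'
      show ∫ z in yq..yηq, p z = 0
      rw [hmain, h0, zero_mul, neg_zero]
    have hDne : D yηq ≠ 0 := ne_of_gt hDpos
    field_simp
    rw [hmain]
    field_simp
    ring
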